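/- Let G = (g_1, ..., g_m) be a list of nonzero polynomials in R whose list of leading monomials (lt(g_1), ..., lt(g_m)) satisfies the Extended Criterion, and suppose that each of S(g_1, g_2), S(g_2, g_3), ..., S(g_{m−1}, g_m) has an S-representation with respect to G. If p = gcd(g_1, g_m), then the leading monomials lt(g_1/p) and lt(g_m/p) are relatively prime. -/

import Mathlib

open MvPolynomial

namespace Paper

variable {n : ℕ} {K : Type*} [Field K]

/-- The leading exponent (exponent of the leading monomial) of a polynomial
with respect to a monomial order. -/
noncomputable def lexp (mo : MonomialOrder (Fin n)) (p : MvPolynomial (Fin n) K) :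
    Fin n →₀ ℕ :=
  mo.toSyn.symm (p.support.sup fun e => mo.toSyn e)

/-- The leading coefficient. -/
noncomputable def lc (mo : MonomialOrder (Fin n)) (p : MvPolynomial (Fin n) K) : K :=
  p.coeff (lexp mo p)

/-- The exponent of σ_{f,g} = lcm(lt f, lt g)/lt f. -/
noncomputable def sigma (mo : MonomialOrder (Fin n)) (f g : MvPolynomial (Fin n) K) :
    Fin n →₀ ℕ :=
  (lexp mo f ⊔ lexp mo g) - lexp mo f

/-- The S-polynomial  S(f,g) = lc(g)·σ_{f,g}·f − lc(f)·σ_{g,f}·g. -/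
noncomputable def Spoly (mo : MonomialOrder (Fin n)) (f g : MvPolynomial (Fin n) K) :
    MvPolynomial (Fin n) K :=
  monomial (sigma mo f g) (lc mo g) * f - monomial (sigma mo g f) (lc mo f) * g

/-- `h` is a `t`-representation of `p` with respect to `G`. -/
def IsTRep (mo : MonomialOrder (Fin n)) {m : ℕ} (G : Fin m → MvPolynomial (Fin n) K)
    (p : MvPolynomial (Fin n) K) (t : Fin n →₀ ℕ) (h : Fin m → MvPolynomial (Fin n) K) :
    Prop :=
  p = ∑ i, h i * G i ∧ ∀ i, h i = 0 ∨ mo.toSyn (lexp mo (h i * G i)) ≤ mo.toSyn t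

/-- `S(g_i, g_j)` has an S-representation with respect to `G`. -/
def HasSRep (mo : MonomialOrder (Fin n)) {m : ℕ} (G : Fin m → MvPolynomial (Fin n) K)
    (i j : Fin m) : Prop :=
  ∃ t h, mo.toSyn t < mo.toSyn (lexp mo (G i) ⊔ lexp mo (G j)) ∧
    IsTRep mo G (Spoly mo (G i) (G j)) t h

/-- `p` reduces to zero with respect to `G`. -/
def ReducesToZero (mo : MonomialOrder (Fin n)) {m : ℕ}
    (G : Fin m → MvPolynomial (Fin n) K) (p : MvPolynomial (Fin n) K) : Prop :=
  p = 0 ∨ ∃ (r : ℕ) (e : Fin r → (Fin n →₀ ℕ)) (c : Fin r → K) (ν : Fin r → Fin m),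
    (∀ i, c i ≠ 0) ∧
    p = ∑ i, monomial (e i) (c i) * G (ν i) ∧
    ∀ i : Fin r, (e i + lexp mo (G (ν i))) ∈
      (p - ∑ j ∈ Finset.univ.filter (fun j => j < i),
        monomial (e j) (c j) * G (ν j)).support

/-- `G` is a Gröbner basis: the leading monomial of every nonzero element of the ideal
generated by `G` is divisible by the leading monomial of some `G i`. -/
def IsGroebner (mo : MonomialOrder (Fin n)) {m : ℕ}
    (G : Fin m → MvPolynomial (Fin n) K) : Prop :=
  ∀ p ∈ Ideal.span (Set.range G), p ≠ 0 → ∃ i, lexp mo (G i) ≤ lexp mo p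

/-- The Extended Criterion for a list of monomials (given as exponent vectors). -/
def EC {n : ℕ} {m : ℕ} (t : Fin (m + 1) → (Fin n →₀ ℕ)) : Prop :=
  (∀ k, (t 0 ⊓ t (Fin.last m)) ≤ t k) ∧
  ∀ x : Fin n, (t 0 ⊓ t (Fin.last m)) x = 0 ∨
    Monotone (fun i => t i x) ∨ Antitone (fun i => t i x)

end Paper

namespace Paper

open MvPolynomial


section Lemmas

open AddMonoidAlgebra

variable {n : ℕ} {K : Type*} [Field K] (mo : MonomialOrder (Fin n))

lemma toSyn_lexp (p : MvPolynomial (Fin n) K) :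
    mo.toSyn (lexp mo p) = AddMonoidAlgebra.supDegree ⇑mo.toSyn p := by
  rw [lexp]
  exact mo.toSyn.apply_symm_apply _

lemma lc_eq_leadingCoeff (p : MvPolynomial (Fin n) K) :
    lc mo p = AddMonoidAlgebra.leadingCoeff ⇑mo.toSyn p := by
  have hrange : AddMonoidAlgebra.supDegree ⇑mo.toSyn p ∈ Set.range ⇑mo.toSyn := by
    rcases eq_or_ne p 0 with rfl | hp
    · exact ⟨0, by simp [AddMonoidAlgebra.supDegree_zero]⟩
    · exact AddMonoidAlgebra.supDegree_mem_range ⇑mo.toSyn hp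
  obtain ⟨a, ha⟩ := hrange
  have h1 : lexp mo p = a := by
    rw [lexp]
    have : (p.support.sup fun e => mo.toSyn e) = mo.toSyn a := ha.symm
    rw [this, mo.toSyn.symm_apply_apply]
  have h2 : (⇑mo.toSyn).invFun (AddMonoidAlgebra.supDegree ⇑mo.toSyn p) = a := by
    rw [← ha, Function.leftInverse_invFun mo.toSyn.injective]
  rw [lc, AddMonoidAlgebra.leadingCoeff, h1, h2]
  rfl

lemma lc_ne_zero {p : MvPolynomial (Fin n) K} (hp : p ≠ 0) : lc mo p ≠ 0 := by
  rw [lc_eq_leadingCoeff]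
  rwa [AddMonoidAlgebra.leadingCoeff_ne_zero mo.toSyn.injective]

lemma le_toSyn_lexp {p : MvPolynomial (Fin n) K} {d : Fin n →₀ ℕ} (h : p.coeff d ≠ 0) :
    mo.toSyn d ≤ mo.toSyn (lexp mo p) := by
  rw [toSyn_lexp]
  exact Finset.le_sup (MvPolynomial.mem_support_iff.mpr h)

lemma coeff_eq_zero_of_lt {p : MvPolynomial (Fin n) K} {d : Fin n →₀ ℕ}
    (h : mo.toSyn (lexp mo p) < mo.toSyn d) : p.coeff d = 0 := by
  by_contra hc
  exact absurd (le_toSyn_lexp mo hc) (not_le.mpr h)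

lemma toSyn_lexp_zero : mo.toSyn (lexp mo (0 : MvPolynomial (Fin n) K)) = ⊥ := by
  rw [toSyn_lexp]
  exact AddMonoidAlgebra.supDegree_zero

lemma lexp_mul {p q : MvPolynomial (Fin n) K} (hp : p ≠ 0) (hq : q ≠ 0) :
    lexp mo (p * q) = lexp mo p + lexp mo q := by
  apply mo.toSyn.injective
  rw [map_add, toSyn_lexp, toSyn_lexp, toSyn_lexp]
  apply AddMonoidAlgebra.supDegree_mul mo.toSyn.injective (by simp [map_add]) ?_ hp hq
  simp only [Ne, mul_eq_zero]
  push_neg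
  constructor <;> rw [AddMonoidAlgebra.leadingCoeff_ne_zero mo.toSyn.injective] <;> assumption

lemma lc_mul (p q : MvPolynomial (Fin n) K) : lc mo (p * q) = lc mo p * lc mo q := by
  rw [lc_eq_leadingCoeff, lc_eq_leadingCoeff, lc_eq_leadingCoeff]
  exact AddMonoidAlgebra.leadingCoeff_mul mo.toSyn.injective (by simp [map_add])

lemma lexp_monomial (d : Fin n →₀ ℕ) {c : K} (hc : c ≠ 0) :
    lexp mo (monomial d c) = d := by
  classical
  rw [lexp, MvPolynomial.support_monomial, if_neg hc, Finset.sup_singleton,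
    mo.toSyn.symm_apply_apply]

lemma lc_monomial (d : Fin n →₀ ℕ) {c : K} (hc : c ≠ 0) :
    lc mo (monomial d c) = c := by
  rw [lc, lexp_monomial mo d hc, MvPolynomial.coeff_monomial, if_pos rfl]

lemma lexp_one : lexp mo (1 : MvPolynomial (Fin n) K) = 0 := by
  have : (1 : MvPolynomial (Fin n) K) = monomial 0 1 := by
    rw [MvPolynomial.monomial_zero', MvPolynomial.C_1]
  rw [this, lexp_monomial mo 0 one_ne_zero]

lemma lc_one : lc mo (1 : MvPolynomial (Fin n) K) = 1 := by
  have : (1 : MvPolynomial (Fin n) K) = monomial 0 1 := by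
    rw [MvPolynomial.monomial_zero', MvPolynomial.C_1]
  rw [this, lc_monomial mo 0 one_ne_zero]

lemma lexp_neg (p : MvPolynomial (Fin n) K) : lexp mo (-p) = lexp mo p := by
  apply mo.toSyn.injective
  rw [toSyn_lexp, toSyn_lexp]
  exact AddMonoidAlgebra.supDegree_neg

/-- Structural entry lemma: a monomial minus something strictly smaller. -/
lemma monomial_sub_small (d : Fin n →₀ ℕ) {c : K} (hc : c ≠ 0) (h : MvPolynomial (Fin n) K)
    (hh : h = 0 ∨ mo.toSyn (lexp mo h) < mo.toSyn d) :
    monomial d c - h ≠ 0 ∧ lexp mo (monomial d c - h) = d ∧ lc mo (monomial d c - h) = c := by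
  rcases hh with rfl | hh
  · rw [sub_zero]
    refine ⟨?_, lexp_monomial mo d hc, lc_monomial mo d hc⟩
    intro h0
    apply hc
    have := congrArg (MvPolynomial.coeff d) h0
    rwa [MvPolynomial.coeff_monomial, if_pos rfl, MvPolynomial.coeff_zero] at this
  · have hd : AddMonoidAlgebra.supDegree ⇑mo.toSyn (-h)
        < AddMonoidAlgebra.supDegree ⇑mo.toSyn (monomial d c : MvPolynomial (Fin n) K) := by
      rw [AddMonoidAlgebra.supDegree_neg, ← toSyn_lexp, ← toSyn_lexp,
        lexp_monomial mo d hc]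
      exact hh
    have hsub : (monomial d c : MvPolynomial (Fin n) K) - h = monomial d c + (-h) := by ring
    have h1 : lexp mo (monomial d c - h) = d := by
      apply mo.toSyn.injective
      rw [toSyn_lexp, hsub, AddMonoidAlgebra.supDegree_add_eq_left hd, ← toSyn_lexp,
        lexp_monomial mo d hc]
    have h2 : lc mo (monomial d c - h) = c := by
      rw [lc_eq_leadingCoeff, hsub, AddMonoidAlgebra.leadingCoeff_add_eq_left hd,
        ← lc_eq_leadingCoeff, lc_monomial mo d hc]
    refine ⟨?_, h1, h2⟩
    intro h0
    apply hc
    rw [← h2, h0, lc]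
    simp

lemma lexp_prod {ι : Type*} (s : Finset ι) (f : ι → MvPolynomial (Fin n) K)
    (hf : ∀ i ∈ s, f i ≠ 0) :
    (∏ i ∈ s, f i) ≠ 0 ∧ lexp mo (∏ i ∈ s, f i) = ∑ i ∈ s, lexp mo (f i) ∧
      lc mo (∏ i ∈ s, f i) = ∏ i ∈ s, lc mo (f i) := by
  classical
  induction s using Finset.cons_induction with
  | empty => simpa using ⟨lexp_one mo, lc_one mo⟩
  | cons a s ha ih =>
      obtain ⟨h1, h2, h3⟩ := ih (fun i hi => hf i (Finset.mem_cons_of_mem hi))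
      have hfa : f a ≠ 0 := hf a (Finset.mem_cons_self a s)
      rw [Finset.prod_cons, Finset.sum_cons, Finset.prod_cons]
      refine ⟨mul_ne_zero hfa h1, ?_, ?_⟩
      · rw [lexp_mul mo hfa h1, h2]
      · rw [lc_mul, h3]

lemma telescope {M : ℕ} (u : Fin (M + 1) → ℕ) (hu : Monotone u) :
    ∑ i : Fin M, (u i.succ - u i.castSucc) = u (Fin.last M) - u 0 := by
  induction M with
  | zero => simp
  | succ M ih =>
      rw [Fin.sum_univ_castSucc]
      have hstep : ∀ i : Fin M, u (Fin.castSucc i).succ - u (Fin.castSucc i).castSucc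
          = (u ∘ Fin.castSucc) i.succ - (u ∘ Fin.castSucc) i.castSucc := by
        intro i
        simp only [Function.comp]
        rw [Fin.succ_castSucc]
      simp only [hstep]
      rw [ih (u ∘ Fin.castSucc) (hu.comp (fun a b hab => Fin.castSucc_le_castSucc_iff.mpr hab))]
      have h1 : u 0 ≤ u (Fin.castSucc (Fin.last M)) := hu (Fin.zero_le _)
      have h2 : u (Fin.castSucc (Fin.last M)) ≤ u (Fin.last (M + 1)) := hu (Fin.le_last _)
      have h3 : (Fin.last M).succ = Fin.last (M + 1) := rfl
      simp only [Function.comp, h3, Fin.castSucc_zero]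
      omega

lemma perm_exists_nonstructural {m : ℕ} (π : Equiv.Perm (Fin m)) (hπ : π ≠ 1) :
    ∃ i, ¬(i = π i ∨ (i.castSucc : Fin (m + 1)) = (π i).succ) := by
  by_contra hco
  push_neg at hco
  apply hπ
  have key : ∀ k : ℕ, ∀ i : Fin m, i.val = k → π i = i := by
    intro k
    induction k using Nat.strong_induction_on with
    | _ k ih =>
      intro i hik
      rcases hco i with h | h
      · exact h.symm
      · exfalso
        have hv : i.val = (π i).val + 1 := by
          have := congrArg Fin.val h
          simpa using this
        have hfix : π (π i) = π i := ih (π i).val (by omega) (π i) rfl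
        have hii : π i = i := π.injective hfix
        rw [hii] at hv
        omega
  ext i
  have := key i.val i rfl
  simp [this]

/-- The matrix of coefficients built from the chain of S-representations. -/
noncomputable def Crow {m : ℕ} (mo : MonomialOrder (Fin n)) (G : Fin (m + 1) → MvPolynomial (Fin n) K)
    (hh : Fin m → Fin (m + 1) → MvPolynomial (Fin n) K) (i : Fin m) (j : Fin (m + 1)) :
    MvPolynomial (Fin n) K :=
  (if j = i.castSucc then monomial (sigma mo (G i.castSucc) (G i.succ)) (lc mo (G i.succ)) else 0)
    - (if j = i.succ then monomial (sigma mo (G i.succ) (G i.castSucc)) (lc mo (G i.castSucc)) else 0)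
    - hh i j

noncomputable def Nmat {m : ℕ} (mo : MonomialOrder (Fin n)) (G : Fin (m + 1) → MvPolynomial (Fin n) K)
    (hh : Fin m → Fin (m + 1) → MvPolynomial (Fin n) K) : Matrix (Fin m) (Fin m) (MvPolynomial (Fin n) K) :=
  Matrix.of fun i j => Crow mo G hh i j.castSucc

noncomputable def alph {m : ℕ} (mo : MonomialOrder (Fin n)) (G : Fin (m + 1) → MvPolynomial (Fin n) K) :
    Fin n →₀ ℕ :=
  ∑ i : Fin m, sigma mo (G i.castSucc) (G i.succ)

lemma crow_sum {m : ℕ} (G : Fin (m + 1) → MvPolynomial (Fin n) K)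
    (hh : Fin m → Fin (m + 1) → MvPolynomial (Fin n) K)
    (hrepeq : ∀ i : Fin m, Spoly mo (G i.castSucc) (G i.succ) = ∑ j, hh i j * G j) (i : Fin m) :
    ∑ j, Crow mo G hh i j * G j = 0 := by
  classical
  have e1 : (∑ j, if j = i.castSucc then
            monomial (sigma mo (G i.castSucc) (G i.succ)) (lc mo (G i.succ)) * G j else 0)
        - ((∑ j, if j = i.succ then
            monomial (sigma mo (G i.succ) (G i.castSucc)) (lc mo (G i.castSucc)) * G j else 0)
        + ∑ j, hh i j * G j)
      = ∑ j, Crow mo G hh i j * G j := by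
    rw [← Finset.sum_add_distrib, ← Finset.sum_sub_distrib]
    refine Finset.sum_congr rfl fun j _ => ?_
    simp only [Crow, sub_mul, ite_mul, zero_mul]
    ring
  rw [← e1, Finset.sum_ite_eq', Finset.sum_ite_eq', if_pos (Finset.mem_univ _),
    if_pos (Finset.mem_univ _), ← hrepeq i, Spoly]
  ring

lemma cramer_rel {m : ℕ} [NeZero m] (G : Fin (m + 1) → MvPolynomial (Fin n) K)
    (hh : Fin m → Fin (m + 1) → MvPolynomial (Fin n) K)
    (hrow : ∀ i : Fin m, ∑ j, Crow mo G hh i j * G j = 0) :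
    (Nmat mo G hh).det * G 0
      = (∑ j, -((Nmat mo G hh).adjugate 0 j * Crow mo G hh j (Fin.last m))) * G (Fin.last m) := by
  classical
  have hmv : (Nmat mo G hh).mulVec (fun j => G j.castSucc)
      = fun i => -(Crow mo G hh i (Fin.last m) * G (Fin.last m)) := by
    funext i
    have h := hrow i
    rw [Fin.sum_univ_castSucc] at h
    have h2 : ∑ j : Fin m, Crow mo G hh i j.castSucc * G j.castSucc
        = -(Crow mo G hh i (Fin.last m) * G (Fin.last m)) := eq_neg_of_add_eq_zero_left h
    simpa [Matrix.mulVec, dotProduct, Nmat] using h2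
  have h1 : (Nmat mo G hh).adjugate.mulVec ((Nmat mo G hh).mulVec (fun j => G j.castSucc))
      = (Nmat mo G hh).det • (fun j => G j.castSucc) := by
    rw [Matrix.mulVec_mulVec, Matrix.adjugate_mul, Matrix.smul_mulVec, Matrix.one_mulVec]
  rw [hmv] at h1
  have h2 := congrFun h1 (0 : Fin m)
  simp only [Pi.smul_apply, smul_eq_mul, Matrix.mulVec, dotProduct,
    Fin.castSucc_zero'] at h2
  rw [← h2, Finset.sum_mul]
  exact Finset.sum_congr rfl fun j _ => by ring

lemma det_props {m : ℕ} (G : Fin (m + 1) → MvPolynomial (Fin n) K)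
    (hG : ∀ i, G i ≠ 0) (hh : Fin m → Fin (m + 1) → MvPolynomial (Fin n) K)
    (hbound : ∀ (i : Fin m) (j : Fin (m + 1)), hh i j ≠ 0 →
      mo.toSyn (lexp mo (hh i j)) + mo.toSyn (lexp mo (G j))
        < mo.toSyn (lexp mo (G i.castSucc) ⊔ lexp mo (G i.succ))) :
    (Nmat mo G hh).det ≠ 0 ∧ lexp mo (Nmat mo G hh).det = alph mo G := by
  classical
  -- abbreviations
  have hsum : ∀ i : Fin m,
      sigma mo (G i.castSucc) (G i.succ) + lexp mo (G i.castSucc)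
        = lexp mo (G i.castSucc) ⊔ lexp mo (G i.succ) := by
    intro i
    rw [sigma]
    exact tsub_add_cancel_of_le le_sup_left
  have hsum' : ∀ i : Fin m,
      sigma mo (G i.succ) (G i.castSucc) + lexp mo (G i.succ)
        = lexp mo (G i.castSucc) ⊔ lexp mo (G i.succ) := by
    intro i
    rw [sigma, sup_comm (lexp mo (G i.succ))]
    exact tsub_add_cancel_of_le le_sup_right
  -- diagonal entries
  have hdiag : ∀ r : Fin m, Nmat mo G hh r r ≠ 0
      ∧ lexp mo (Nmat mo G hh r r) = sigma mo (G r.castSucc) (G r.succ)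
      ∧ lc mo (Nmat mo G hh r r) = lc mo (G r.succ) := by
    intro r
    have hcs : (r.castSucc : Fin (m + 1)) ≠ r.succ := ne_of_lt r.castSucc_lt_succ
    have hEq : Nmat mo G hh r r
        = monomial (sigma mo (G r.castSucc) (G r.succ)) (lc mo (G r.succ)) - hh r r.castSucc := by
      simp only [Nmat, Matrix.of_apply, Crow, if_neg hcs, sub_zero, eq_self_iff_true, if_true]
    rw [hEq]
    apply monomial_sub_small mo _ (lc_ne_zero mo (hG r.succ))
    rcases eq_or_ne (hh r r.castSucc) 0 with h0 | h0
    · exact Or.inl h0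
    · right
      have hb := hbound r r.castSucc h0
      rw [← hsum r, map_add] at hb
      exact lt_of_add_lt_add_right hb
  -- general entry bound
  have hent : ∀ r jc : Fin m, Nmat mo G hh r jc ≠ 0 →
      (mo.toSyn (lexp mo (Nmat mo G hh r jc)) + mo.toSyn (lexp mo (G jc.castSucc))
        ≤ mo.toSyn (lexp mo (G r.castSucc) ⊔ lexp mo (G r.succ)))
      ∧ (¬(jc = r ∨ (jc.castSucc : Fin (m + 1)) = r.succ) →
        mo.toSyn (lexp mo (Nmat mo G hh r jc)) + mo.toSyn (lexp mo (G jc.castSucc))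
          < mo.toSyn (lexp mo (G r.castSucc) ⊔ lexp mo (G r.succ))) := by
    intro r jc hne
    by_cases h1 : jc = r
    · subst h1
      refine ⟨?_, fun hcon => absurd (Or.inl rfl) hcon⟩
      rw [(hdiag jc).2.1, ← map_add, hsum jc]
    · have hc2' : (jc.castSucc : Fin (m + 1)) ≠ r.castSucc :=
        fun hcon => h1 (Fin.castSucc_injective _ hcon)
      by_cases h2 : (jc.castSucc : Fin (m + 1)) = r.succ
      · have hGeq : G jc.castSucc = G r.succ := by rw [h2]
        have hEq : Nmat mo G hh r jc
            = monomial (sigma mo (G r.succ) (G r.castSucc)) (-(lc mo (G r.castSucc)))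
              - hh r jc.castSucc := by
          simp only [Nmat, Matrix.of_apply, Crow, if_neg hc2', if_pos h2, zero_sub, map_neg]
        have hsmall : hh r jc.castSucc = 0
            ∨ mo.toSyn (lexp mo (hh r jc.castSucc))
              < mo.toSyn (sigma mo (G r.succ) (G r.castSucc)) := by
          rcases eq_or_ne (hh r jc.castSucc) 0 with h0 | h0
          · exact Or.inl h0
          · right
            have hb := hbound r jc.castSucc h0
            rw [hGeq, ← hsum' r, map_add] at hb
            exact lt_of_add_lt_add_right hb
        obtain ⟨-, hlx, -⟩ := monomial_sub_small mo _
          (neg_ne_zero.mpr (lc_ne_zero mo (hG r.castSucc))) _ hsmall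
        refine ⟨?_, fun hcon => absurd (Or.inr h2) hcon⟩
        rw [hEq, hlx, hGeq, ← map_add, hsum' r]
      · have hEq : Nmat mo G hh r jc = -(hh r jc.castSucc) := by
          simp only [Nmat, Matrix.of_apply, Crow, if_neg hc2', if_neg h2, sub_self, zero_sub]
        have hh0 : hh r jc.castSucc ≠ 0 := by
          intro h0
          apply hne
          rw [hEq, h0, neg_zero]
        have hb := hbound r jc.castSucc hh0
        rw [hEq, lexp_neg]
        exact ⟨hb.le, fun _ => hb⟩
  -- main diagonal product
  obtain ⟨hP0, hPl, hPc⟩ := lexp_prod mo Finset.univ (fun r => Nmat mo G hh r r)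
    (fun r _ => (hdiag r).1)
  have hPl' : lexp mo (∏ r, Nmat mo G hh r r) = alph mo G := by
    rw [hPl, alph]
    exact Finset.sum_congr rfl fun r _ => (hdiag r).2.1
  have hPc' : lc mo (∏ r, Nmat mo G hh r r) = ∏ r : Fin m, lc mo (G r.succ) := by
    rw [hPc]
    exact Finset.prod_congr rfl fun r _ => (hdiag r).2.2
  have hlcprod : (∏ r : Fin m, lc mo (G r.succ)) ≠ 0 :=
    Finset.prod_ne_zero_iff.mpr fun r _ => lc_ne_zero mo (hG r.succ)
  have hmainc : MvPolynomial.coeff (alph mo G) (∏ r, Nmat mo G hh r r)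
      = ∏ r : Fin m, lc mo (G r.succ) := by
    rw [← hPc', lc, hPl']
  -- strict bound for non-identity permutations
  have hperm : ∀ π : Equiv.Perm (Fin m), π ≠ 1 →
      (∏ i, Nmat mo G hh (π i) i) = 0
      ∨ mo.toSyn (lexp mo (∏ i, Nmat mo G hh (π i) i)) < mo.toSyn (alph mo G) := by
    intro π hπ
    by_cases hz : ∃ i, Nmat mo G hh (π i) i = 0
    · obtain ⟨i, hi⟩ := hz
      exact Or.inl (Finset.prod_eq_zero (Finset.mem_univ i) hi)
    · right
      push_neg at hz
      obtain ⟨-, hQl, -⟩ := lexp_prod mo Finset.univ (fun i => Nmat mo G hh (π i) i)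
        (fun i _ => hz i)
      obtain ⟨i₀, hi₀⟩ := perm_exists_nonstructural π hπ
      have hle : ∀ i ∈ Finset.univ (α := Fin m),
          mo.toSyn (lexp mo (Nmat mo G hh (π i) i)) + mo.toSyn (lexp mo (G i.castSucc))
            ≤ mo.toSyn (lexp mo (G (π i).castSucc) ⊔ lexp mo (G (π i).succ)) :=
        fun i _ => (hent (π i) i (hz i)).1
      have hstrict : mo.toSyn (lexp mo (Nmat mo G hh (π i₀) i₀))
            + mo.toSyn (lexp mo (G i₀.castSucc))
          < mo.toSyn (lexp mo (G (π i₀).castSucc) ⊔ lexp mo (G (π i₀).succ)) :=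
        (hent (π i₀) i₀ (hz i₀)).2 hi₀
      have hsumlt : ∑ i, (mo.toSyn (lexp mo (Nmat mo G hh (π i) i))
            + mo.toSyn (lexp mo (G i.castSucc)))
          < ∑ i, mo.toSyn (lexp mo (G (π i).castSucc) ⊔ lexp mo (G (π i).succ)) :=
        Finset.sum_lt_sum hle ⟨i₀, Finset.mem_univ i₀, hstrict⟩
      have hre : ∑ i, mo.toSyn (lexp mo (G (π i).castSucc) ⊔ lexp mo (G (π i).succ))
          = ∑ r : Fin m, mo.toSyn (lexp mo (G r.castSucc) ⊔ lexp mo (G r.succ)) :=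
        Equiv.sum_comp π (fun r => mo.toSyn (lexp mo (G r.castSucc) ⊔ lexp mo (G r.succ)))
      have hαsum : mo.toSyn (alph mo G) + ∑ i : Fin m, mo.toSyn (lexp mo (G i.castSucc))
          = ∑ r : Fin m, mo.toSyn (lexp mo (G r.castSucc) ⊔ lexp mo (G r.succ)) := by
        rw [alph, map_sum, ← Finset.sum_add_distrib]
        exact Finset.sum_congr rfl fun i _ => by rw [← map_add, hsum i]
      rw [Finset.sum_add_distrib, hre, ← hαsum] at hsumlt
      have hQl' : mo.toSyn (lexp mo (∏ i, Nmat mo G hh (π i) i))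
          = ∑ i, mo.toSyn (lexp mo (Nmat mo G hh (π i) i)) := by
        rw [hQl, map_sum]
      rw [hQl']
      exact lt_of_add_lt_add_right hsumlt
  -- coefficient of alph in the determinant
  have hdetc : MvPolynomial.coeff (alph mo G) (Nmat mo G hh).det
      = ∏ r : Fin m, lc mo (G r.succ) := by
    rw [Matrix.det_apply, MvPolynomial.coeff_sum]
    rw [Finset.sum_eq_single (1 : Equiv.Perm (Fin m))]
    · simp only [Equiv.Perm.sign_one, one_smul, Equiv.Perm.coe_one, id_eq]
      exact hmainc
    · intro π _ hπ
      have hz : MvPolynomial.coeff (alph mo G) (∏ i, Nmat mo G hh (π i) i) = 0 := by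
        rcases hperm π hπ with h0 | hlt
        · rw [h0, MvPolynomial.coeff_zero]
        · exact coeff_eq_zero_of_lt mo hlt
      rcases Int.units_eq_one_or (Equiv.Perm.sign π) with hs | hs <;> rw [hs]
      · rw [one_smul]
        exact hz
      · rw [Units.smul_def, Units.val_neg, Units.val_one, neg_zsmul, one_zsmul,
          MvPolynomial.coeff_neg, hz, neg_zero]
    · intro h1
      exact absurd (Finset.mem_univ _) h1
  have hdet0 : (Nmat mo G hh).det ≠ 0 := by
    intro h
    apply hlcprod
    rw [← hdetc, h, MvPolynomial.coeff_zero]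
  refine ⟨hdet0, ?_⟩
  -- upper bound for every term of the determinant
  have hub : ∀ π : Equiv.Perm (Fin m),
      mo.toSyn (lexp mo ((Equiv.Perm.sign π : ℤˣ) • ∏ i, Nmat mo G hh (π i) i))
        ≤ mo.toSyn (alph mo G) := by
    intro π
    have hsmul : lexp mo ((Equiv.Perm.sign π : ℤˣ) • ∏ i, Nmat mo G hh (π i) i)
        = lexp mo (∏ i, Nmat mo G hh (π i) i) := by
      rcases Int.units_eq_one_or (Equiv.Perm.sign π) with hs | hs <;> rw [hs]
      · rw [one_smul]
      · rw [Units.smul_def, Units.val_neg, Units.val_one, neg_zsmul, one_zsmul, lexp_neg]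
    rw [hsmul]
    rcases eq_or_ne π 1 with rfl | hπ
    · simp only [Equiv.Perm.coe_one, id_eq]
      rw [hPl']
    · rcases hperm π hπ with h0 | hlt
      · rw [h0]
        rw [toSyn_lexp_zero]
        exact bot_le
      · exact hlt.le
  have hle1 : mo.toSyn (alph mo G) ≤ mo.toSyn (lexp mo (Nmat mo G hh).det) :=
    le_toSyn_lexp mo (by rw [hdetc]; exact hlcprod)
  have hle2 : mo.toSyn (lexp mo (Nmat mo G hh).det) ≤ mo.toSyn (alph mo G) := by
    by_contra hcon
    push_neg at hcon
    have h0 : MvPolynomial.coeff (lexp mo (Nmat mo G hh).det) (Nmat mo G hh).det = 0 := by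
      set d := lexp mo (Nmat mo G hh).det with hd
      rw [Matrix.det_apply, MvPolynomial.coeff_sum]
      refine Finset.sum_eq_zero fun π _ => ?_
      exact coeff_eq_zero_of_lt mo (lt_of_le_of_lt (hub π) hcon)
    exact lc_ne_zero mo hdet0 (by rw [lc]; exact h0)
  exact mo.toSyn.injective (le_antisymm hle2 hle1)

end Lemmas

/-- If the leading monomials of `G = (g_1, …, g_{m+1})` satisfy the Extended Criterion and
each consecutive S-polynomial has an S-representation with respect to `G`, then the
leading monomials of the cofactors of `p = gcd(g_1, g_{m+1})` are relatively prime. -/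
theorem ec_implies_relprime_cofactor_lts {n : ℕ} {K : Type*} [Field K]
    (mo : MonomialOrder (Fin n)) {m : ℕ}
    (G : Fin (m + 1) → MvPolynomial (Fin n) K) (hG : ∀ i, G i ≠ 0)
    (hEC : EC (fun i => lexp mo (G i)))
    (hchain : ∀ i : Fin m, HasSRep mo G i.castSucc i.succ)
    (p f₁ fₘ : MvPolynomial (Fin n) K)
    (hp₁ : G 0 = f₁ * p) (hpₘ : G (Fin.last m) = fₘ * p)
    (hpgcd : ∀ q : MvPolynomial (Fin n) K, q ∣ G 0 → q ∣ G (Fin.last m) → q ∣ p) :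
    lexp mo f₁ ⊓ lexp mo fₘ = 0 := by
  classical
  have hp0 : p ≠ 0 := by
    intro h
    exact hG 0 (by rw [hp₁, h, mul_zero])
  have hf₁0 : f₁ ≠ 0 := by
    intro h
    exact hG 0 (by rw [hp₁, h, zero_mul])
  have hfₘ0 : fₘ ≠ 0 := by
    intro h
    exact hG (Fin.last m) (by rw [hpₘ, h, zero_mul])
  have hrel : IsRelPrime f₁ fₘ := by
    intro q hq1 hqm
    have h1 : q * p ∣ G 0 := by rw [hp₁]; exact mul_dvd_mul_right hq1 p
    have h2 : q * p ∣ G (Fin.last m) := by rw [hpₘ]; exact mul_dvd_mul_right hqm p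
    obtain ⟨s, hs⟩ := hpgcd (q * p) h1 h2
    have hqs : 1 = q * s := by
      apply mul_left_cancel₀ hp0
      rw [mul_one]
      calc p = q * p * s := hs
        _ = p * (q * s) := by ring
    exact IsUnit.of_mul_eq_one s hqs.symm
  cases m with
  | zero =>
      have hlast : (Fin.last 0 : Fin 1) = 0 := rfl
      have hff : f₁ = fₘ := by
        apply mul_right_cancel₀ hp0
        rw [← hp₁, ← hpₘ, hlast]
      have hdd : f₁ ∣ fₘ := ⟨1, by rw [mul_one, hff]⟩
      have hu : IsUnit f₁ := hrel dvd_rfl hdd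
      obtain ⟨w, hw1, -⟩ := isUnit_iff_exists.mp hu
      have hw0 : w ≠ 0 := by
        intro h
        rw [h, mul_zero] at hw1
        exact one_ne_zero hw1.symm
      have hl0 : lexp mo f₁ + lexp mo w = 0 := by
        rw [← lexp_mul mo hf₁0 hw0, hw1, lexp_one]
      have hf1lexp : lexp mo f₁ = 0 := by
        ext x
        have hx := congrArg (fun f => f x) hl0
        simp only [Finsupp.add_apply, Finsupp.zero_apply] at hx ⊢
        omega
      rw [hf1lexp]
      ext x
      rw [Finsupp.inf_apply]
      simp
  | succ m' =>
      choose tr hh hcond using hchain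
      have hlt : ∀ i : Fin (m' + 1),
          mo.toSyn (tr i) < mo.toSyn (lexp mo (G i.castSucc) ⊔ lexp mo (G i.succ)) :=
        fun i => (hcond i).1
      have hrepeq : ∀ i : Fin (m' + 1),
          Spoly mo (G i.castSucc) (G i.succ) = ∑ j, hh i j * G j :=
        fun i => (hcond i).2.1
      have hbound : ∀ (i : Fin (m' + 1)) (j : Fin (m' + 1 + 1)), hh i j ≠ 0 →
          mo.toSyn (lexp mo (hh i j)) + mo.toSyn (lexp mo (G j))
            < mo.toSyn (lexp mo (G i.castSucc) ⊔ lexp mo (G i.succ)) := by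
        intro i j hne
        have hb := ((hcond i).2.2 j).resolve_left hne
        rw [lexp_mul mo hne (hG j), map_add] at hb
        exact lt_of_le_of_lt hb (hlt i)
      obtain ⟨hdet0, hdetl⟩ := det_props mo G hG hh hbound
      have hAB := cramer_rel mo G hh (crow_sum mo G hh hrepeq)
      set B := ∑ j, -((Nmat mo G hh).adjugate 0 j * Crow mo G hh j (Fin.last (m' + 1))) with hB
      have hcan : (Nmat mo G hh).det * f₁ = B * fₘ := by
        apply mul_right_cancel₀ hp0
        calc (Nmat mo G hh).det * f₁ * p = (Nmat mo G hh).det * (f₁ * p) := by ring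
          _ = (Nmat mo G hh).det * G 0 := by rw [hp₁]
          _ = B * G (Fin.last (m' + 1)) := hAB
          _ = B * (fₘ * p) := by rw [hpₘ]
          _ = B * fₘ * p := by ring
      have hdvd : fₘ ∣ (Nmat mo G hh).det :=
        (hrel.symm).dvd_of_dvd_mul_right ⟨B, by rw [hcan]; ring⟩
      obtain ⟨Cq, hCq⟩ := hdvd
      have hCq0 : Cq ≠ 0 := by
        intro h
        rw [h, mul_zero] at hCq
        exact hdet0 hCq
      have hαeq : alph mo G = lexp mo fₘ + lexp mo Cq := by
        rw [← hdetl, hCq, lexp_mul mo hfₘ0 hCq0]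
      have hcomp : ∀ x, lexp mo fₘ x ≤ alph mo G x := by
        intro x
        rw [hαeq, Finsupp.add_apply]
        exact Nat.le_add_right _ _
      have ht0 : lexp mo (G 0) = lexp mo f₁ + lexp mo p := by
        rw [hp₁, lexp_mul mo hf₁0 hp0]
      have htl : lexp mo (G (Fin.last (m' + 1))) = lexp mo fₘ + lexp mo p := by
        rw [hpₘ, lexp_mul mo hfₘ0 hp0]
      ext x
      rw [Finsupp.inf_apply, Finsupp.zero_apply]
      show min (lexp mo f₁ x) (lexp mo fₘ x) = 0
      have e0 : lexp mo (G 0) x = lexp mo f₁ x + lexp mo p x := by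
        rw [ht0, Finsupp.add_apply]
      have el : lexp mo (G (Fin.last (m' + 1))) x = lexp mo fₘ x + lexp mo p x := by
        rw [htl, Finsupp.add_apply]
      have ecmp := hcomp x
      rcases hEC.2 x with h0 | hmono | hanti
      · have h0' : lexp mo (G 0) x ⊓ lexp mo (G (Fin.last (m' + 1))) x = 0 := by
          have := h0
          rw [Finsupp.inf_apply] at this
          exact this
        rw [show lexp mo (G 0) x ⊓ lexp mo (G (Fin.last (m' + 1))) x
          = min (lexp mo (G 0) x) (lexp mo (G (Fin.last (m' + 1))) x) from rfl] at h0'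
        omega
      · have hαx : alph mo G x = lexp mo (G (Fin.last (m' + 1))) x - lexp mo (G 0) x := by
          rw [alph, Finsupp.finset_sum_apply]
          have hterm : ∀ i : Fin (m' + 1), sigma mo (G i.castSucc) (G i.succ) x
              = lexp mo (G i.succ) x - lexp mo (G i.castSucc) x := by
            intro i
            rw [sigma, Finsupp.tsub_apply, Finsupp.sup_apply]
            have hmle : lexp mo (G i.castSucc) x ≤ lexp mo (G i.succ) x :=
              hmono (le_of_lt i.castSucc_lt_succ)
            rw [show ∀ a b : ℕ, a ⊔ b = max a b from fun _ _ => rfl]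
            omega
          simp only [hterm]
          exact telescope (fun i => lexp mo (G i) x) (fun a b hab => hmono hab)
        omega
      · have hαx : alph mo G x = 0 := by
          rw [alph, Finsupp.finset_sum_apply]
          apply Finset.sum_eq_zero
          intro i _
          rw [sigma, Finsupp.tsub_apply, Finsupp.sup_apply]
          have hmle : lexp mo (G i.succ) x ≤ lexp mo (G i.castSucc) x :=
            hanti (le_of_lt i.castSucc_lt_succ)
          rw [show ∀ a b : ℕ, a ⊔ b = max a b from fun _ _ => rfl]
          omega
        omega

end Paper
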